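/- Let F be a finite field with q elements, let v ≥ 2, let Δ ≥ 1, let u be an integer and m ≥ 0 an integer, and let C be a Δ-divisible set of points of PG(v−1, q) with |C| = u + m·Δ. For each hyperplane H of F^v let h_H denote the integer (|C ∩ H| − u)/Δ. Then, as rational numbers, (q − 1)·∑_H h_H·(h_H − 1) = τ_q(u, Δ, m)·q^{v−2}/Δ² − m·(m − 1), where the sum ranges over all hyperplanes H of F^v and τ_q(u, Δ, m) = m(m − q)Δ² + (q²u − 2mqu + mq + 2mu − qu − m)Δ + (q − 1)²u² + (q − 1)u. -/

import Mathlib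

open scoped Classical

section PGDefs

variable {F : Type} [Field F] {M : Type} [AddCommGroup M] [Module F M]

/-- The number of points of `C` contained in the subspace `S`, i.e. `|C ∩ S|`. -/
noncomputable def interCard (C : Finset (Submodule F M)) (S : Submodule F M) : ℕ :=
  (C.filter (fun P => P ≤ S)).card

/-- `H` is a hyperplane, i.e. a subspace of codimension 1. -/
def IsHyperplane (H : Submodule F M) : Prop :=
  Module.finrank F ↥H = Module.finrank F M - 1

/-- Every element of `C` is a point, i.e. a 1-dimensional subspace. -/
def IsPointSet (C : Finset (Submodule F M)) : Prop :=
  ∀ P ∈ C, Module.finrank F ↥P = 1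

/-- `C` is `Δ`-divisible: `|C ∩ H| ≡ |C| (mod Δ)` for every hyperplane `H`. -/
def DivisibleSet (Δ : ℕ) (C : Finset (Submodule F M)) : Prop :=
  ∀ H : Submodule F M, IsHyperplane H → interCard C H ≡ C.card [MOD Δ]

noncomputable instance fintypeSubmodule [Finite M] : Fintype (Submodule F M) :=
  have : Finite (Submodule F M) :=
    Finite.of_injective (fun S => (S : Set M)) SetLike.coe_injective
  Fintype.ofFinite _

end PGDefs

section Counting

open Module LinearMap
variable {F U : Type} [Field F] [AddCommGroup U] [Module F U]
variable {F U : Type} [Field F] [AddCommGroup U] [Module F U]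

lemma exists_smul_eq_of_ker_eq (f g : U →ₗ[F] F) (hf : f ≠ 0)
    (h : LinearMap.ker f = LinearMap.ker g) : ∃ c : F, c ≠ 0 ∧ g = c • f := by
  obtain ⟨x, hx⟩ : ∃ x, f x ≠ 0 := by
    by_contra hc
    push_neg at hc
    exact hf (LinearMap.ext fun y => by simp [hc y])
  have hgx : g x ≠ 0 := by
    intro h0
    have : x ∈ LinearMap.ker f := h ▸ (LinearMap.mem_ker.2 h0)
    exact hx this
  refine ⟨g x / f x, div_ne_zero hgx hx, ?_⟩
  ext y
  have hker : y - (f y / f x) • x ∈ LinearMap.ker f := by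
    simp [LinearMap.mem_ker, div_mul_cancel₀, hx]
  rw [h] at hker
  have : g y - (f y / f x) * g x = 0 := by simpa [sub_eq_zero] using hker
  have hy : g y = (f y / f x) * g x := by linear_combination this
  rw [hy]
  simp only [LinearMap.smul_apply, smul_eq_mul]
  field_simp

lemma ker_finrank [FiniteDimensional F U] (f : U →ₗ[F] F) (hf : f ≠ 0) :
    finrank F (LinearMap.ker f) = finrank F U - 1 := by
  have hrn := f.finrank_range_add_finrank_ker
  have hr : LinearMap.range f = ⊤ := by
    rcases Ideal.eq_bot_or_top (LinearMap.range f) with h | h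
    · exact absurd (LinearMap.range_eq_bot.1 h) hf
    · exact h
  rw [hr, finrank_top, finrank_self] at hrn
  omega

lemma exists_ker_eq [FiniteDimensional F U] (H : Submodule F U)
    (hd : 1 ≤ finrank F U) (hH : finrank F H = finrank F U - 1) :
    ∃ f : U →ₗ[F] F, f ≠ 0 ∧ LinearMap.ker f = H := by
  have hq := H.finrank_quotient_add_finrank
  have h1 : finrank F (U ⧸ H) = finrank F F := by rw [finrank_self]; omega
  obtain ⟨e⟩ := FiniteDimensional.nonempty_linearEquiv_of_finrank_eq h1
  refine ⟨e.toLinearMap ∘ₗ H.mkQ, ?_, ?_⟩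
  · intro h0
    have : LinearMap.ker (e.toLinearMap ∘ₗ H.mkQ) = ⊤ := by rw [h0]; exact LinearMap.ker_zero
    rw [LinearMap.ker_comp, LinearEquiv.ker, Submodule.comap_bot, Submodule.ker_mkQ] at this
    rw [this, finrank_top F U] at hH
    omega
  · rw [LinearMap.ker_comp, LinearEquiv.ker, Submodule.comap_bot, Submodule.ker_mkQ]

noncomputable instance [Finite F] [Finite U] : Fintype (U →ₗ[F] F) :=
  have : Finite (U →ₗ[F] F) :=
    Finite.of_injective (fun f => (f : U → F)) (fun f g h => LinearMap.ext (congr_fun h))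
  Fintype.ofFinite _

lemma hyp_count [Fintype F] [Finite U] (q : ℕ) (hq : Fintype.card F = q)
    (hd : 1 ≤ finrank F U) :
    (Finset.univ.filter
        (fun H : Submodule F U => finrank F H = finrank F U - 1)).card * (q - 1)
      = q ^ finrank F U - 1 := by
  haveI : Fintype U := Fintype.ofFinite U
  haveI : Module.Finite F U := Module.Finite.of_finite
  classical
  set d := finrank F U with hdd
  -- card of the space of functionals
  have hcardL : Fintype.card (U →ₗ[F] F) = q ^ d := by
    rw [card_eq_pow_finrank (K := F) (V := U →ₗ[F] F), hq]
    congr 1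
    exact Subspace.dual_finrank_eq
  set NZ : Finset (U →ₗ[F] F) := Finset.univ.filter (fun f => f ≠ 0) with hNZ
  set Hyp : Finset (Submodule F U) :=
    Finset.univ.filter (fun H => finrank F H = d - 1) with hHyp
  have hmem : ∀ f ∈ NZ, LinearMap.ker f ∈ Hyp := by
    intro f hf
    simp only [hNZ, Finset.mem_filter, Finset.mem_univ, true_and] at hf
    simp only [hHyp, Finset.mem_filter, Finset.mem_univ, true_and]
    exact ker_finrank f hf
  have hsum := Finset.card_eq_sum_card_fiberwise hmem
  have hfiber : ∀ H ∈ Hyp, (NZ.filter (fun f => LinearMap.ker f = H)).card = q - 1 := by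
    intro H hH
    simp only [hHyp, Finset.mem_filter, Finset.mem_univ, true_and] at hH
    obtain ⟨f₀, hf₀ne, hf₀ker⟩ := exists_ker_eq H hd hH
    obtain ⟨x, hx⟩ : ∃ x, f₀ x ≠ 0 := by
      by_contra hc
      push_neg at hc
      exact hf₀ne (LinearMap.ext fun y => by simp [hc y])
    have : (Finset.univ.filter (fun c : F => c ≠ 0)).card
        = (NZ.filter (fun f => LinearMap.ker f = H)).card := by
      apply Finset.card_bij (fun c _ => c • f₀)
      · intro c hc
        simp only [Finset.mem_filter, Finset.mem_univ, true_and] at hc ⊢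
        refine ⟨?_, ?_⟩
        · simp only [hNZ, Finset.mem_filter, Finset.mem_univ, true_and]
          exact smul_ne_zero hc hf₀ne
        · rw [LinearMap.ker_smul _ _ hc, hf₀ker]
      · intro c hc c' hc' h
        have := congr_fun (congr_arg (fun f : U →ₗ[F] F => (f : U → F)) h) x
        simp only [LinearMap.smul_apply, smul_eq_mul] at this
        exact mul_right_cancel₀ hx this
      · intro g hg
        simp only [Finset.mem_filter, Finset.mem_univ, true_and, hNZ] at hg
        obtain ⟨hgne, hgker⟩ := hg
        obtain ⟨c, hc, hgc⟩ := exists_smul_eq_of_ker_eq f₀ g hf₀ne (by rw [hf₀ker, hgker])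
        exact ⟨c, by simp [hc], hgc.symm⟩
    rw [← this]
    rw [Finset.filter_ne' Finset.univ 0, Finset.card_erase_of_mem (Finset.mem_univ 0),
      Finset.card_univ, hq]
  have hNZcard : NZ.card = q ^ d - 1 := by
    rw [hNZ, Finset.filter_ne' Finset.univ 0, Finset.card_erase_of_mem (Finset.mem_univ 0),
      Finset.card_univ, hcardL]
  rw [hNZcard, Finset.sum_congr rfl hfiber, Finset.sum_const, smul_eq_mul] at hsum
  exact hsum.symm

lemma finrank_comap_mkQ [FiniteDimensional F U] (W : Submodule F U)
    (H' : Submodule F (U ⧸ W)) :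
    finrank F (Submodule.comap W.mkQ H') = finrank F H' + finrank F W := by
  set S := Submodule.comap W.mkQ H' with hS
  have hWS : W ≤ S := by
    intro x hx
    simp only [hS, Submodule.mem_comap, Submodule.mkQ_apply]
    rw [(Submodule.Quotient.mk_eq_zero W).2 hx]
    exact H'.zero_mem
  set f : S →ₗ[F] U ⧸ W := W.mkQ ∘ₗ S.subtype with hf
  have hrn := f.finrank_range_add_finrank_ker
  have hrange : LinearMap.range f = H' := by
    rw [hf, LinearMap.range_comp, Submodule.range_subtype]
    exact Submodule.map_comap_eq_self (by rw [Submodule.range_mkQ]; exact le_top)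
  have hker : LinearMap.ker f = Submodule.comap S.subtype W := by
    rw [hf, LinearMap.ker_comp, Submodule.ker_mkQ]
  have hkerrank : finrank F (LinearMap.ker f) = finrank F W := by
    rw [hker]
    exact (Submodule.comapSubtypeEquivOfLe hWS).finrank_eq
  rw [hrange, hkerrank] at hrn
  exact hrn.symm

lemma count_hyp_ge [Fintype F] [Finite U] (q : ℕ) (hq : Fintype.card F = q)
    (hd1 : 1 ≤ finrank F U) (W : Submodule F U) (k : ℕ) (hk : finrank F W = k)
    (hkv : k ≤ finrank F U) :
    (Finset.univ.filter (fun H : Submodule F U =>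
        finrank F H = finrank F U - 1 ∧ W ≤ H)).card * (q - 1)
      = q ^ (finrank F U - k) - 1 := by
  haveI : Fintype U := Fintype.ofFinite U
  haveI : Module.Finite F U := Module.Finite.of_finite
  set d := finrank F U with hdd
  rcases eq_or_lt_of_le hkv with heq | hlt
  · -- k = d : W = ⊤, no hyperplane contains it
    have hWtop : W = ⊤ := Submodule.eq_top_of_finrank_eq (by omega)
    have : (Finset.univ.filter (fun H : Submodule F U =>
        finrank F H = d - 1 ∧ W ≤ H)) = ∅ := by
      rw [Finset.filter_eq_empty_iff]
      intro H _
      rintro ⟨hHrank, hWH⟩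
      rw [hWtop, top_le_iff] at hWH
      rw [hWH, finrank_top] at hHrank
      omega
    rw [this]
    simp [← heq, hk, Nat.sub_self]
  · -- k < d
    haveI : Finite (U ⧸ W) := Quotient.finite _
    have hqd : finrank F (U ⧸ W) = d - k := by
      have := W.finrank_quotient_add_finrank
      omega
    have hbij : (Finset.univ.filter (fun H : Submodule F U =>
          finrank F H = d - 1 ∧ W ≤ H)).card
        = (Finset.univ.filter (fun H' : Submodule F (U ⧸ W) =>
            finrank F H' = finrank F (U ⧸ W) - 1)).card := by
      apply Finset.card_nbij' (fun H => Submodule.map W.mkQ H)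
        (fun H' => Submodule.comap W.mkQ H')
      · intro H hH
        simp only [Finset.mem_coe, Finset.mem_filter, Finset.mem_univ, true_and] at hH ⊢
        obtain ⟨hHrank, hWH⟩ := hH
        have hcm : Submodule.comap W.mkQ (Submodule.map W.mkQ H) = H := by
          rw [Submodule.comap_map_eq, Submodule.ker_mkQ, sup_eq_left.2 hWH]
        have := finrank_comap_mkQ W (Submodule.map W.mkQ H)
        rw [hcm, hHrank, hk] at this
        omega
      · intro H' hH'
        simp only [Finset.mem_coe, Finset.mem_filter, Finset.mem_univ, true_and] at hH' ⊢
        have := finrank_comap_mkQ W H'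
        constructor
        · rw [this, hH', hk, hqd]; omega
        · intro x hx
          simp only [Submodule.mem_comap, Submodule.mkQ_apply]
          rw [(Submodule.Quotient.mk_eq_zero W).2 hx]
          exact H'.zero_mem
      · intro H hH
        simp only [Finset.mem_coe, Finset.mem_filter, Finset.mem_univ, true_and] at hH
        show Submodule.comap W.mkQ (Submodule.map W.mkQ H) = H
        rw [Submodule.comap_map_eq, Submodule.ker_mkQ, sup_eq_left.2 hH.2]
      · intro H' _
        exact Submodule.map_comap_eq_self (by rw [Submodule.range_mkQ]; exact le_top)
    rw [hbij, hyp_count q hq (by omega), hqd]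

lemma finrank_sup_two [FiniteDimensional F U] (P P' : Submodule F U)
    (h1 : finrank F P = 1) (h1' : finrank F P' = 1) (hne : P ≠ P') :
    finrank F ↥(P ⊔ P') = 2 := by
  have hinf : P ⊓ P' = ⊥ := by
    by_contra hb
    have hle : finrank F ↥(P ⊓ P') ≤ 1 := h1 ▸ Submodule.finrank_mono inf_le_left
    have hge : 1 ≤ finrank F ↥(P ⊓ P') := by
      rcases Nat.eq_zero_or_pos (finrank F ↥(P ⊓ P')) with h0 | h0
      · exact absurd (Submodule.finrank_eq_zero.1 h0) hb
      · exact h0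
    have heq : P ⊓ P' = P :=
      Submodule.eq_of_le_of_finrank_le inf_le_left (by omega)
    have hPP' : P ≤ P' := heq ▸ inf_le_right
    exact hne (Submodule.eq_of_le_of_finrank_le hPP' (by omega))
  have := Submodule.finrank_sup_add_finrank_inf_eq P P'
  rw [hinf, h1, h1'] at this
  simpa using this

end Counting

set_option maxHeartbeats 1000000 in
/-- Lemma 5.7: for a `Δ`-divisible set `C` with `|C| = u + m·Δ`, setting
`h_H = (|C ∩ H| - u)/Δ`, one has
`(q-1)·∑_H h_H·(h_H - 1) = τ_q(u,Δ,m)·q^(v-2)/Δ² - m·(m-1)` as rational numbers, where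
`τ_q(u,Δ,m) = m(m-q)Δ² + (q²u - 2mqu + mq + 2mu - qu - m)Δ + (q-1)²u² + (q-1)u`. -/
theorem second_moment_identity (F : Type) [Field F] [Fintype F] (q v : ℕ)
    (hq : Fintype.card F = q) (hv : 2 ≤ v)
    (Δ : ℕ) (hΔ : 1 ≤ Δ) (u : ℤ) (m : ℕ)
    (C : Finset (Submodule F (Fin v → F))) (hpts : IsPointSet C)
    (hdiv : DivisibleSet Δ C)
    (hcard : (C.card : ℤ) = u + (m : ℤ) * (Δ : ℤ)) :
    ((q : ℚ) - 1) *
        (∑ H ∈ Finset.univ.filter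
            (fun H : Submodule F (Fin v → F) => IsHyperplane H),
          ((((interCard C H : ℚ) - (u : ℚ)) / (Δ : ℚ)) *
            ((((interCard C H : ℚ) - (u : ℚ)) / (Δ : ℚ)) - 1)))
      = (((m : ℚ) * ((m : ℚ) - (q : ℚ)) * (Δ : ℚ) ^ 2
            + ((q : ℚ) ^ 2 * (u : ℚ) - 2 * (m : ℚ) * (q : ℚ) * (u : ℚ)
                + (m : ℚ) * (q : ℚ) + 2 * (m : ℚ) * (u : ℚ)
                - (q : ℚ) * (u : ℚ) - (m : ℚ)) * (Δ : ℚ)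
            + ((q : ℚ) - 1) ^ 2 * (u : ℚ) ^ 2 + ((q : ℚ) - 1) * (u : ℚ))
          * (q : ℚ) ^ (v - 2)) / (Δ : ℚ) ^ 2
        - (m : ℚ) * ((m : ℚ) - 1) := by
  have hq2 : 2 ≤ q := by rw [← hq]; exact Fintype.one_lt_card
  obtain ⟨w, rfl⟩ : ∃ w, v = w + 2 := ⟨v - 2, by omega⟩
  have hfr : Module.finrank F (Fin (w + 2) → F) = w + 2 := Module.finrank_fin_fun F
  simp only [Nat.add_sub_cancel]
  set Hyp : Finset (Submodule F (Fin (w + 2) → F)) :=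
    Finset.univ.filter (fun H => IsHyperplane H) with hHyp
  -- the key counting fact
  have key : ∀ (W : Submodule F (Fin (w + 2) → F)) (k : ℕ), Module.finrank F W = k → k ≤ w + 2 →
      (Hyp.filter (fun H => W ≤ H)).card * (q - 1) = q ^ (w + 2 - k) - 1 := by
    intro W k hk hkv
    have h := count_hyp_ge q hq (by rw [hfr]; omega) W k hk (by rw [hfr]; omega)
    rw [hHyp, Finset.filter_filter]
    have hpred : ∀ H ∈ (Finset.univ : Finset (Submodule F (Fin (w + 2) → F))),
        (IsHyperplane H ∧ W ≤ H) ↔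
          (Module.finrank F ↥H = Module.finrank F (Fin (w + 2) → F) - 1 ∧ W ≤ H) := by
      intro H _
      rw [IsHyperplane]
    rw [Finset.filter_congr hpred, h, hfr]
  have hN : Hyp.card * (q - 1) = q ^ (w + 2) - 1 := by
    have h := key ⊥ 0 (finrank_bot F _) (by omega)
    rwa [Finset.filter_true_of_mem (fun _ _ => bot_le), Nat.sub_zero] at h
  have hP : ∀ P ∈ C, (Hyp.filter (fun H => P ≤ H)).card * (q - 1) = q ^ (w + 1) - 1 := by
    intro P hPm
    have h := key P 1 (hpts P hPm) (by omega)
    simpa using h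
  have hPP : ∀ P ∈ C, ∀ P' ∈ C,
      (Hyp.filter (fun H => P ≤ H ∧ P' ≤ H)).card * (q - 1)
        = if P = P' then q ^ (w + 1) - 1 else q ^ w - 1 := by
    intro P hPm P' hP'm
    by_cases hpe : P = P'
    · subst hpe
      rw [if_pos rfl]
      simpa only [and_self] using hP P hPm
    · rw [if_neg hpe]
      have hsup := key (P ⊔ P') 2
        (finrank_sup_two P P' (hpts P hPm) (hpts P' hP'm) hpe) (by omega)
      simp only [sup_le_iff] at hsup
      simpa using hsup
  -- double counting
  have hswap1 : ∑ H ∈ Hyp, interCard C H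
      = ∑ P ∈ C, (Hyp.filter (fun H => P ≤ H)).card := by
    simp only [interCard, Finset.card_filter]
    exact Finset.sum_comm
  have hswap2 : ∑ H ∈ Hyp, interCard C H * interCard C H
      = ∑ P ∈ C, ∑ P' ∈ C, (Hyp.filter (fun H => P ≤ H ∧ P' ≤ H)).card := by
    simp only [interCard, Finset.card_filter]
    have hmul : ∀ H : Submodule F (Fin (w + 2) → F),
        (∑ P ∈ C, if P ≤ H then 1 else 0) * (∑ P' ∈ C, if P' ≤ H then 1 else 0)
          = ∑ P ∈ C, ∑ P' ∈ C, if P ≤ H ∧ P' ≤ H then 1 else 0 := by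
      intro H
      rw [Finset.sum_mul_sum]
      refine Finset.sum_congr rfl fun P _ => Finset.sum_congr rfl fun P' _ => ?_
      split_ifs <;> simp_all
    calc ∑ H ∈ Hyp, (∑ P ∈ C, if P ≤ H then 1 else 0) * (∑ P' ∈ C, if P' ≤ H then 1 else 0)
        = ∑ H ∈ Hyp, ∑ P ∈ C, ∑ P' ∈ C, (if P ≤ H ∧ P' ≤ H then 1 else 0) :=
          Finset.sum_congr rfl fun H _ => hmul H
      _ = ∑ P ∈ C, ∑ H ∈ Hyp, ∑ P' ∈ C, (if P ≤ H ∧ P' ≤ H then 1 else 0) :=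
          Finset.sum_comm
      _ = ∑ P ∈ C, ∑ P' ∈ C, ∑ H ∈ Hyp, (if P ≤ H ∧ P' ≤ H then 1 else 0) :=
          Finset.sum_congr rfl fun P _ => Finset.sum_comm
  -- rational versions
  have hq1Q : (q : ℚ) - 1 ≠ 0 := by
    have : (2 : ℚ) ≤ (q : ℚ) := by exact_mod_cast hq2
    intro h; nlinarith
  have hΔQ : (Δ : ℚ) ≠ 0 := by
    have : (1 : ℚ) ≤ (Δ : ℚ) := by exact_mod_cast hΔ
    intro h; nlinarith
  have hpow : ∀ k : ℕ, (1 : ℕ) ≤ q ^ k := fun k => Nat.one_le_pow _ _ (by omega)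
  have castsub : ∀ k : ℕ, ((q ^ k - 1 : ℕ) : ℚ) = (q : ℚ) ^ k - 1 := by
    intro k
    rw [Nat.cast_sub (hpow k), Nat.cast_pow, Nat.cast_one]
  have castfib : ∀ (s : Finset (Submodule F (Fin (w + 2) → F))) (k : ℕ),
      s.card * (q - 1) = q ^ k - 1 → (s.card : ℚ) * ((q : ℚ) - 1) = (q : ℚ) ^ k - 1 := by
    intro s k h
    have := congrArg (Nat.cast : ℕ → ℚ) h
    rwa [Nat.cast_mul, Nat.cast_sub (by omega : 1 ≤ q), Nat.cast_one, castsub] at this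
  set n : ℚ := (C.card : ℚ) with hn'
  have hnQ : n = (u : ℚ) + (m : ℚ) * (Δ : ℚ) := by
    rw [hn']; exact_mod_cast congrArg (Int.cast : ℤ → ℚ) hcard
  have e3 : ((Hyp.card : ℚ)) * ((q : ℚ) - 1) = (q : ℚ) ^ (w + 2) - 1 := castfib _ _ hN
  have e2 : (∑ H ∈ Hyp, (interCard C H : ℚ)) * ((q : ℚ) - 1)
      = n * ((q : ℚ) ^ (w + 1) - 1) := by
    calc (∑ H ∈ Hyp, (interCard C H : ℚ)) * ((q : ℚ) - 1)
        = ((∑ H ∈ Hyp, interCard C H : ℕ) : ℚ) * ((q : ℚ) - 1) := by push_cast; ring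
      _ = ((∑ P ∈ C, (Hyp.filter (fun H => P ≤ H)).card : ℕ) : ℚ) * ((q : ℚ) - 1) := by
          rw [hswap1]
      _ = ∑ P ∈ C, ((Hyp.filter (fun H => P ≤ H)).card : ℚ) * ((q : ℚ) - 1) := by
          push_cast; rw [Finset.sum_mul]
      _ = ∑ P ∈ C, ((q : ℚ) ^ (w + 1) - 1) :=
          Finset.sum_congr rfl fun P hPm => castfib _ _ (hP P hPm)
      _ = n * ((q : ℚ) ^ (w + 1) - 1) := by rw [Finset.sum_const, nsmul_eq_mul]
  have e1 : (∑ H ∈ Hyp, (interCard C H : ℚ) * (interCard C H : ℚ)) * ((q : ℚ) - 1)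
      = n * (n * ((q : ℚ) ^ w - 1) + ((q : ℚ) ^ (w + 1) - 1) - ((q : ℚ) ^ w - 1)) := by
    calc (∑ H ∈ Hyp, (interCard C H : ℚ) * (interCard C H : ℚ)) * ((q : ℚ) - 1)
        = ((∑ H ∈ Hyp, interCard C H * interCard C H : ℕ) : ℚ) * ((q : ℚ) - 1) := by
          push_cast; ring
      _ = ((∑ P ∈ C, ∑ P' ∈ C, (Hyp.filter (fun H => P ≤ H ∧ P' ≤ H)).card : ℕ) : ℚ)
            * ((q : ℚ) - 1) := by rw [hswap2]
      _ = ∑ P ∈ C, ∑ P' ∈ C,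
            ((Hyp.filter (fun H => P ≤ H ∧ P' ≤ H)).card : ℚ) * ((q : ℚ) - 1) := by
          push_cast; rw [Finset.sum_mul]; exact Finset.sum_congr rfl fun P _ => Finset.sum_mul ..
      _ = ∑ P ∈ C, ∑ P' ∈ C,
            (if P = P' then (q : ℚ) ^ (w + 1) - 1 else (q : ℚ) ^ w - 1) := by
          refine Finset.sum_congr rfl fun P hPm => Finset.sum_congr rfl fun P' hP'm => ?_
          have h := hPP P hPm P' hP'm
          rcases eq_or_ne P P' with h' | h'
          · rw [if_pos h'] at h ⊢
            exact castfib _ _ h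
          · rw [if_neg h'] at h ⊢
            exact castfib _ _ h
      _ = ∑ P ∈ C, (n * ((q : ℚ) ^ w - 1) + (((q : ℚ) ^ (w + 1) - 1) - ((q : ℚ) ^ w - 1))) := by
          refine Finset.sum_congr rfl fun P hPm => ?_
          have hsplit : ∀ P' : Submodule F (Fin (w + 2) → F),
              (if P = P' then (q : ℚ) ^ (w + 1) - 1 else (q : ℚ) ^ w - 1)
                = ((q : ℚ) ^ w - 1)
                  + (if P = P' then ((q : ℚ) ^ (w + 1) - 1) - ((q : ℚ) ^ w - 1) else 0) := by
            intro P'; split_ifs <;> ring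
          simp only [hsplit]
          rw [Finset.sum_add_distrib, Finset.sum_const, nsmul_eq_mul,
            Finset.sum_ite_eq C P (fun _ => ((q : ℚ) ^ (w + 1) - 1) - ((q : ℚ) ^ w - 1)),
            if_pos hPm]
      _ = n * (n * ((q : ℚ) ^ w - 1) + ((q : ℚ) ^ (w + 1) - 1) - ((q : ℚ) ^ w - 1)) := by
          rw [Finset.sum_const, nsmul_eq_mul]; ring
  -- transform the left-hand side
  have hterm : ∀ H : Submodule F (Fin (w + 2) → F),
      ((q : ℚ) - 1) * ((((interCard C H : ℚ) - (u : ℚ)) / (Δ : ℚ)) *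
          ((((interCard C H : ℚ) - (u : ℚ)) / (Δ : ℚ)) - 1))
        = (((q : ℚ) - 1) * ((interCard C H : ℚ) * (interCard C H : ℚ))
            - (2 * (u : ℚ) + (Δ : ℚ)) * (((q : ℚ) - 1) * (interCard C H : ℚ))
            + (u : ℚ) * ((u : ℚ) + (Δ : ℚ)) * ((q : ℚ) - 1)) / (Δ : ℚ) ^ 2 := by
    intro H
    field_simp
    ring
  rw [Finset.mul_sum]
  rw [Finset.sum_congr rfl fun H _ => hterm H]
  rw [← Finset.sum_div, Finset.sum_add_distrib, Finset.sum_sub_distrib]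
  simp only [← Finset.mul_sum]
  rw [Finset.sum_const, nsmul_eq_mul]
  rw [hnQ] at e1 e2
  rw [div_eq_iff (pow_ne_zero 2 hΔQ)]
  conv_rhs => rw [sub_mul, div_mul_cancel₀ _ (pow_ne_zero 2 hΔQ)]
  linear_combination e1 - (2 * (u : ℚ) + (Δ : ℚ)) * e2 + (u : ℚ) * ((u : ℚ) + (Δ : ℚ)) * e3
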